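/- (Proposition of Section 8, Case I.) On ℝ⁴ with coordinates (x₁,x₂,ξ₁,ξ₂), let g(x,ξ)=ξ₁²−x₁−ξ₂. For a real quadratic form φ₀(x)=½(αx₁²+2βx₁x₂+γx₂²), put f₁=ξ₁−∂_{x₁}φ₀, f₂=ξ₂−∂_{x₂}φ₀, Λ={f₁=f₂=0}. Then: (i) {f₁,f₂}≡0 and the glancing conditions f₁(0)=f₂(0)=g(0)={g,f₁}(0)={g,f₂}(0)=0 hold if and only if β=−1 and γ=0, i.e. φ₀(x)=½(a·x₁²−2x₁x₂) with a=α; (ii) for such φ₀, Λ is transverse at 0 to F={x₁=0}, i.e. T₀Λ∩span{(0,0,1,0)}={0}; (iii) the matrix A₀ equals 2·[[1,a],[a,a²]] and the vector B₀ equals 2·(−a,1). -/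

import Mathlib

private lemma stmt15_quad (a b c x : ℝ) :
    HasDerivAt (fun s => a*s^2 + b*s + c) (2*a*x + b) x := by
  have h := (((hasDerivAt_pow 2 x).const_mul a).add ((hasDerivAt_id x).const_mul b)).add_const c
  have hv : 2*a*x + b = a*((2:ℕ)*x^(2-1)) + b*1 := by push_cast; ring
  rw [hv]; exact h

private lemma stmt15_deriv_cmul (c x : ℝ) : deriv (fun s => c * s) x = c := by
  simpa using ((hasDerivAt_id x).const_mul c).deriv

private lemma stmt15_deriv_csub (c x : ℝ) : deriv (fun s => c - s) x = -1 := by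
  simpa using ((hasDerivAt_id x).const_sub c).deriv

/-- Section 8, Case I: On `ℝ⁴` with coordinates `(x₁,x₂,ξ₁,ξ₂)`, for
`g = ξ₁² − x₁ − ξ₂`, `φ₀(x) = ½(αx₁² + 2βx₁x₂ + γx₂²)`, `f₁ = ξ₁ − ∂_{x₁}φ₀`,
`f₂ = ξ₂ − ∂_{x₂}φ₀`: (i) `{f₁,f₂} ≡ 0`, and the glancing conditions at `0` hold iff
`β = −1 ∧ γ = 0`, i.e. `φ₀ = ½(a·x₁² − 2x₁x₂)` with `a = α`; (ii) then `Λ = {f₁ = f₂ = 0}`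
is transverse at `0` to `F = {x₁ = 0}` (`T₀Λ ∩ span{(0,0,1,0)} = {0}`); (iii) then
`A₀ = 2[[1,a],[a,a²]]` and `B₀ = 2(−a,1)`. -/
theorem stmt15 (α β γ : ℝ)
    -- the Poisson bracket on ℝ⁴ with coordinates (x₁, x₂, ξ₁, ξ₂)
    (Pb : ((ℝ × ℝ × ℝ × ℝ) → ℝ) → ((ℝ × ℝ × ℝ × ℝ) → ℝ) → (ℝ × ℝ × ℝ × ℝ) → ℝ)
    (hPb : ∀ f g z, Pb f g z =
      deriv (fun s => f (z.1, z.2.1, s, z.2.2.2)) z.2.2.1 *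
        deriv (fun s => g (s, z.2.1, z.2.2.1, z.2.2.2)) z.1 -
      deriv (fun s => f (s, z.2.1, z.2.2.1, z.2.2.2)) z.1 *
        deriv (fun s => g (z.1, z.2.1, s, z.2.2.2)) z.2.2.1 +
      deriv (fun s => f (z.1, z.2.1, z.2.2.1, s)) z.2.2.2 *
        deriv (fun s => g (z.1, s, z.2.2.1, z.2.2.2)) z.2.1 -
      deriv (fun s => f (z.1, s, z.2.2.1, z.2.2.2)) z.2.1 *
        deriv (fun s => g (z.1, z.2.1, z.2.2.1, s)) z.2.2.2)
    (g : (ℝ × ℝ × ℝ × ℝ) → ℝ)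
    (hg : ∀ z : ℝ × ℝ × ℝ × ℝ, g z = z.2.2.1 ^ 2 - z.1 - z.2.2.2)
    (φ₀ : ℝ × ℝ → ℝ)
    (hφ₀ : ∀ x : ℝ × ℝ, φ₀ x = (α * x.1 ^ 2 + 2 * β * x.1 * x.2 + γ * x.2 ^ 2) / 2)
    (f₁ f₂ : (ℝ × ℝ × ℝ × ℝ) → ℝ)
    (hf₁ : ∀ z : ℝ × ℝ × ℝ × ℝ, f₁ z = z.2.2.1 - deriv (fun s => φ₀ (s, z.2.1)) z.1)
    (hf₂ : ∀ z : ℝ × ℝ × ℝ × ℝ, f₂ z = z.2.2.2 - deriv (fun s => φ₀ (z.1, s)) z.2.1) :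
    -- (i)
    (∀ z, Pb f₁ f₂ z = 0) ∧
    ((f₁ (0, 0, 0, 0) = 0 ∧ f₂ (0, 0, 0, 0) = 0 ∧ g (0, 0, 0, 0) = 0 ∧
      Pb g f₁ (0, 0, 0, 0) = 0 ∧ Pb g f₂ (0, 0, 0, 0) = 0) ↔ (β = -1 ∧ γ = 0)) ∧
    -- (ii) transversality of Λ = {f₁ = f₂ = 0} to F = {x₁ = 0} at 0
    (β = -1 ∧ γ = 0 →
      ∀ v : ℝ × ℝ × ℝ × ℝ,
        fderiv ℝ f₁ (0, 0, 0, 0) v = 0 → fderiv ℝ f₂ (0, 0, 0, 0) v = 0 →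
        v ∈ Submodule.span ℝ {(((0 : ℝ), (0 : ℝ), (1 : ℝ), (0 : ℝ)))} → v = 0) ∧
    -- (iii) the matrix A₀ and the vector B₀
    (β = -1 ∧ γ = 0 →
      Pb f₂ (Pb f₂ g) (0, 0, 0, 0) = 2 ∧
      -Pb f₁ (Pb f₂ g) (0, 0, 0, 0) = 2 * α ∧
      -Pb f₂ (Pb f₁ g) (0, 0, 0, 0) = 2 * α ∧
      Pb f₁ (Pb f₁ g) (0, 0, 0, 0) = 2 * α ^ 2 ∧
      Pb g (Pb g f₁) (0, 0, 0, 0) = 2 * (-α) ∧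
      Pb g (Pb g f₂) (0, 0, 0, 0) = 2 * 1) := by
  -- closed forms for the slice derivatives of φ₀
  have d1 : ∀ c x : ℝ, deriv (fun s => φ₀ (s, c)) x = α*x + β*c := by
    intro c x
    have e : (fun s => φ₀ (s, c)) = fun s => (α/2)*s^2 + (β*c)*s + (γ*c^2/2) := by
      funext s; rw [hφ₀]; ring
    rw [e, (stmt15_quad (α/2) (β*c) (γ*c^2/2) x).deriv]; ring
  have d2 : ∀ c x : ℝ, deriv (fun s => φ₀ (c, s)) x = β*c + γ*x := by
    intro c x
    have e : (fun s => φ₀ (c, s)) = fun s => (γ/2)*s^2 + (β*c)*s + (α*c^2/2) := by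
      funext s; rw [hφ₀]; ring
    rw [e, (stmt15_quad (γ/2) (β*c) (α*c^2/2) x).deriv]; ring
  -- closed forms for f₁, f₂, g
  have E1 : f₁ = fun z => z.2.2.1 - (α*z.1 + β*z.2.1) := funext fun z => by rw [hf₁, d1]
  have E2 : f₂ = fun z => z.2.2.2 - (β*z.1 + γ*z.2.1) := funext fun z => by rw [hf₂, d2]
  have Eg : g = fun z => z.2.2.1^2 - z.1 - z.2.2.2 := funext hg
  -- first-level Poisson brackets
  have B0 : ∀ z, Pb f₁ f₂ z = 0 := by
    intro z
    simp only [hPb, E1, E2, Eg, deriv_sub_const, deriv_const_sub, deriv_add_const,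
      deriv_const_add, stmt15_deriv_cmul, stmt15_deriv_csub, deriv_id'', deriv_const', deriv_pow]
    ring
  have hGF1 : Pb g f₁ = fun z : ℝ × ℝ × ℝ × ℝ => (1 + β) - 2*α*z.2.2.1 := by
    funext z
    simp only [hPb, E1, E2, Eg, deriv_sub_const, deriv_const_sub, deriv_add_const,
      deriv_const_add, stmt15_deriv_cmul, stmt15_deriv_csub, deriv_id'', deriv_const', deriv_pow_field]
    ring
  have hGF2 : Pb g f₂ = fun z : ℝ × ℝ × ℝ × ℝ => γ - 2*β*z.2.2.1 := by
    funext z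
    simp only [hPb, E1, E2, Eg, deriv_sub_const, deriv_const_sub, deriv_add_const,
      deriv_const_add, stmt15_deriv_cmul, stmt15_deriv_csub, deriv_id'', deriv_const', deriv_pow_field]
    ring
  have hFG1 : Pb f₁ g = fun z : ℝ × ℝ × ℝ × ℝ => 2*α*z.2.2.1 - (1 + β) := by
    funext z
    simp only [hPb, E1, E2, Eg, deriv_sub_const, deriv_const_sub, deriv_add_const,
      deriv_const_add, stmt15_deriv_cmul, stmt15_deriv_csub, deriv_id'', deriv_const', deriv_pow_field]
    ring
  have hFG2 : Pb f₂ g = fun z : ℝ × ℝ × ℝ × ℝ => 2*β*z.2.2.1 - γ := by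
    funext z
    simp only [hPb, E1, E2, Eg, deriv_sub_const, deriv_const_sub, deriv_add_const,
      deriv_const_add, stmt15_deriv_cmul, stmt15_deriv_csub, deriv_id'', deriv_const', deriv_pow_field]
    ring
  refine ⟨B0, ?_, ?_, ?_⟩
  · -- the glancing conditions iff β = -1 ∧ γ = 0
    constructor
    · rintro ⟨-, -, -, h4, h5⟩
      rw [hGF1] at h4; rw [hGF2] at h5
      norm_num at h4 h5
      constructor <;> linarith
    · rintro ⟨hβ, hγ⟩
      subst hβ; subst hγ
      refine ⟨by simp [E1], by simp [E2], by simp [Eg], ?_, ?_⟩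
      · rw [hGF1]; norm_num
      · rw [hGF2]; norm_num
  · -- transversality
    rintro ⟨hβ, hγ⟩ v h1 h2 hv
    rw [Submodule.mem_span_singleton] at hv
    obtain ⟨c, rfl⟩ := hv
    have p1 : HasFDerivAt (fun z : ℝ×ℝ×ℝ×ℝ => z.1)
        (ContinuousLinearMap.fst ℝ ℝ (ℝ×ℝ×ℝ)) ((0:ℝ),(0:ℝ),(0:ℝ),(0:ℝ)) := hasFDerivAt_fst
    have p2 : HasFDerivAt (fun z : ℝ×ℝ×ℝ×ℝ => z.2.1)
        ((ContinuousLinearMap.fst ℝ ℝ (ℝ×ℝ)).comp (ContinuousLinearMap.snd ℝ ℝ (ℝ×ℝ×ℝ)))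
        ((0:ℝ),(0:ℝ),(0:ℝ),(0:ℝ)) := hasFDerivAt_fst.comp _ hasFDerivAt_snd
    have p3 : HasFDerivAt (fun z : ℝ×ℝ×ℝ×ℝ => z.2.2.1)
        ((ContinuousLinearMap.fst ℝ ℝ ℝ).comp ((ContinuousLinearMap.snd ℝ ℝ (ℝ×ℝ)).comp
          (ContinuousLinearMap.snd ℝ ℝ (ℝ×ℝ×ℝ)))) ((0:ℝ),(0:ℝ),(0:ℝ),(0:ℝ)) :=
      hasFDerivAt_fst.comp _ (hasFDerivAt_snd.comp _ hasFDerivAt_snd)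
    have hf := p3.sub ((p1.const_mul α).add (p2.const_mul β))
    rw [E1] at h1
    rw [show (fun z : ℝ×ℝ×ℝ×ℝ => z.2.2.1 - (α*z.1 + β*z.2.1)) = ((fun z : ℝ×ℝ×ℝ×ℝ => z.2.2.1) - ((fun y : ℝ×ℝ×ℝ×ℝ => α * y.1) + fun y : ℝ×ℝ×ℝ×ℝ => β * y.2.1)) from rfl, hf.fderiv] at h1
    simp [Prod.smul_mk, smul_eq_mul] at h1 ⊢
    exact h1
  · -- the matrix A₀ and the vector B₀
    rintro ⟨hβ, hγ⟩
    subst hβ; subst hγ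
    refine ⟨?_, ?_, ?_, ?_, ?_, ?_⟩
    · rw [hFG2]
      simp only [hPb, E1, E2, deriv_sub_const, deriv_const_sub, deriv_add_const, deriv_const_add,
        stmt15_deriv_cmul, stmt15_deriv_csub, deriv_id'', deriv_const', deriv_pow]
      norm_num
    · rw [hFG2]
      simp only [hPb, E1, E2, deriv_sub_const, deriv_const_sub, deriv_add_const, deriv_const_add,
        stmt15_deriv_cmul, stmt15_deriv_csub, deriv_id'', deriv_const', deriv_pow]
      norm_num; try ring
    · rw [hFG1]
      simp only [hPb, E1, E2, deriv_sub_const, deriv_const_sub, deriv_add_const, deriv_const_add,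
        stmt15_deriv_cmul, stmt15_deriv_csub, deriv_id'', deriv_const', deriv_pow]
      norm_num; try ring
    · rw [hFG1]
      simp only [hPb, E1, E2, deriv_sub_const, deriv_const_sub, deriv_add_const, deriv_const_add,
        stmt15_deriv_cmul, stmt15_deriv_csub, deriv_id'', deriv_const', deriv_pow]
      norm_num; try ring
    · rw [hGF1]
      simp only [hPb, Eg, deriv_sub_const, deriv_const_sub, deriv_add_const, deriv_const_add,
        stmt15_deriv_cmul, stmt15_deriv_csub, deriv_id'', deriv_const', deriv_pow]
      norm_num; try ring
    · rw [hGF2]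
      simp only [hPb, Eg, deriv_sub_const, deriv_const_sub, deriv_add_const, deriv_const_add,
        stmt15_deriv_cmul, stmt15_deriv_csub, deriv_id'', deriv_const', deriv_pow]
      norm_num; try ring
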